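/- Suppose (A,B,C) has relative degree ρ with 1 ≤ ρ ≤ n, and let B̄ : Matrix (Fin (n−1)) (Fin n) 𝕜 have rank n−1 with B̄ * B = 0. Then for every i with 0 ≤ i ≤ ρ−2 the row vector C * A^i lies in the span of the rows of B̄, while the row vector C * A^(ρ−1) does not lie in the span of the rows of B̄. -/

import Mathlib

open Matrix

/-- If `(A, B, C)` has relative degree `ρ` with `1 ≤ ρ ≤ n`, and
`B̄` has rank `n - 1` with `B̄ * B = 0`, then for `0 ≤ i ≤ ρ - 2` the row vector
`C * A ^ i` lies in the span of the rows of `B̄`, while `C * A ^ (ρ - 1)` does not. -/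
theorem stmt1 {𝕜 : Type*} [Field 𝕜] {n ρ : ℕ} (hn : 1 ≤ n) (hρ : 1 ≤ ρ) (hρn : ρ ≤ n)
    (A : Matrix (Fin n) (Fin n) 𝕜) (B : Matrix (Fin n) (Fin 1) 𝕜)
    (C : Matrix (Fin 1) (Fin n) 𝕜)
    (hrd : ∀ i : ℕ, i + 2 ≤ ρ → C * A ^ i * B = 0)
    (hrd' : C * A ^ (ρ - 1) * B ≠ 0)
    (Bbar : Matrix (Fin (n - 1)) (Fin n) 𝕜)
    (hBbar_rank : Bbar.rank = n - 1)
    (hBbarB : Bbar * B = 0) :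
    (∀ i : ℕ, i + 2 ≤ ρ →
      (C * A ^ i) 0 ∈ Submodule.span 𝕜 (Set.range Bbar)) ∧
    (C * A ^ (ρ - 1)) 0 ∉ Submodule.span 𝕜 (Set.range Bbar) := by
  classical
  set b : Fin n → 𝕜 := fun j => B j 0 with hb
  -- b ≠ 0
  have hB0 : B ≠ 0 := by
    intro h
    apply hrd'
    rw [h, Matrix.mul_zero]
  have hbne : ∃ j, b j ≠ 0 := by
    by_contra h
    push_neg at h
    apply hB0
    ext j k
    have := h j
    have hk : k = 0 := Subsingleton.elim k 0
    simpa [hb, hk] using this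
  obtain ⟨j₀, hj₀⟩ := hbne
  -- linear functional v ↦ v ⬝ᵥ b
  let f : (Fin n → 𝕜) →ₗ[𝕜] 𝕜 :=
    { toFun := fun v => v ⬝ᵥ b
      map_add' := fun x y => add_dotProduct x y b
      map_smul' := fun c x => smul_dotProduct c x b }
  have hrange : LinearMap.range f = ⊤ := by
    rw [LinearMap.range_eq_top]
    intro c
    refine ⟨(Pi.single j₀ (c / b j₀) : Fin n → 𝕜), ?_⟩
    show (Pi.single j₀ (c / b j₀) : Fin n → 𝕜) ⬝ᵥ b = c
    rw [single_dotProduct, div_mul_cancel₀ _ hj₀]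
  have hker : Module.finrank 𝕜 (LinearMap.ker f) = n - 1 := by
    have h1 := LinearMap.finrank_range_add_finrank_ker f
    rw [hrange] at h1
    simp only [finrank_top, Module.finrank_self,
      Module.finrank_fin_fun, Fintype.card_fin] at h1
    omega
  -- span of rows of Bbar ≤ ker f
  have hle : Submodule.span 𝕜 (Set.range Bbar) ≤ LinearMap.ker f := by
    rw [Submodule.span_le]
    rintro _ ⟨i, rfl⟩
    have := congrFun (congrFun hBbarB i) 0
    simpa [Matrix.mul_apply, LinearMap.mem_ker, f, dotProduct, hb] using this
  have hspanrank : Module.finrank 𝕜 (Submodule.span 𝕜 (Set.range Bbar)) = n - 1 := by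
    have h := Matrix.rank_eq_finrank_span_row Bbar
    rw [hBbar_rank] at h
    exact h.symm
  have heq : Submodule.span 𝕜 (Set.range Bbar) = LinearMap.ker f :=
    Submodule.eq_of_le_of_finrank_eq hle (by rw [hspanrank, hker])
  have hmem : ∀ v : Fin n → 𝕜, v ∈ Submodule.span 𝕜 (Set.range Bbar) ↔ v ⬝ᵥ b = 0 := by
    intro v
    rw [heq, LinearMap.mem_ker]
    rfl
  have hentry : ∀ M : Matrix (Fin 1) (Fin n) 𝕜, (M 0) ⬝ᵥ b = (M * B) 0 0 := by
    intro M
    simp [Matrix.mul_apply, dotProduct, hb]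
  constructor
  · intro i hi
    rw [hmem, hentry]
    rw [hrd i hi]
    rfl
  · rw [hmem, hentry]
    intro h
    apply hrd'
    ext i k
    have hi : i = 0 := Subsingleton.elim i 0
    have hk : k = 0 := Subsingleton.elim k 0
    rw [hi, hk, h]
    rfl
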